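/- Under condition (C1) and assuming E[‖W_1‖_1] < ∞, for every m = (m_1, …, m_L) ∈ ℤ_+^L one has P(D_1(n) = m) → E[∏_{l=1}^L (c_l W_{1l})^{m_l} e^{−c_l W_{1l}} / m_l!] as n → ∞. -/

import Mathlib

open MeasureTheory Filter Finset ProbabilityTheory

noncomputable section

def poissonPMF (r : ℝ) (k : ℕ) : ℝ := Real.exp (-r) * r ^ k / (Nat.factorial k)

/-- pmf of a Poisson-binomial distribution (sum of independent Bernoulli(q j)). -/
def pbPMF {n : ℕ} (q : Fin n → ℝ) (k : ℕ) : ℝ :=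
  ∑ S ∈ Finset.powersetCard k Finset.univ, (∏ j ∈ S, q j) * ∏ j ∈ Finset.univ \ S, (1 - q j)

namespace Stmt0Aux
variable {ι : Type*} [DecidableEq ι]

def esF (u : Finset ι) (q : ι → ℝ) (k : ℕ) : ℝ := ∑ S ∈ u.powersetCard k, ∏ j ∈ S, q j
lemma esF_zero (u : Finset ι) (q : ι → ℝ) : esF u q 0 = 1 := by simp [esF]
lemma esF_one (u : Finset ι) (q : ι → ℝ) : esF u q 1 = ∑ j ∈ u, q j := by
  simp [esF, powersetCard_one, sum_map]
lemma esF_nonneg (u : Finset ι) (q : ι → ℝ) (hq : ∀ j ∈ u, 0 ≤ q j) (k : ℕ) :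
    0 ≤ esF u q k := by
  refine sum_nonneg fun S hS => prod_nonneg fun j hj => hq j ?_
  exact (mem_powersetCard.1 hS).1 hj
lemma esF_mono (u v : Finset ι) (q : ι → ℝ) (hq : ∀ j ∈ v, 0 ≤ q j) (huv : u ⊆ v) (k : ℕ) :
    esF u q k ≤ esF v q k := by
  refine sum_le_sum_of_subset_of_nonneg (powersetCard_mono huv) fun S hS _ => ?_
  exact prod_nonneg fun j hj => hq j ((mem_powersetCard.1 hS).1 hj)
lemma esF_insert (a : ι) (u : Finset ι) (h : a ∉ u) (q : ι → ℝ) (k : ℕ) :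
    esF (insert a u) q (k+1) = esF u q (k+1) + q a * esF u q k := by
  classical
  rw [esF, powersetCard_succ_insert h, sum_union, esF, esF, mul_sum]
  · congr 1
    rw [sum_image]
    · refine sum_congr rfl fun S hS => ?_
      have haS : a ∉ S := fun hc => h ((mem_powersetCard.1 hS).1 hc)
      rw [prod_insert haS]
    · intro S hS T hT hST
      have haS : a ∉ S := fun hc => h ((mem_powersetCard.1 hS).1 hc)
      have haT : a ∉ T := fun hc => h ((mem_powersetCard.1 hT).1 hc)
      rw [← erase_insert haS, ← erase_insert haT, hST]
  · rw [disjoint_right]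
    intro S hS hS2
    obtain ⟨T, hT, rfl⟩ := mem_image.1 hS
    have haT : a ∉ T := fun hc => h ((mem_powersetCard.1 hT).1 hc)
    exact h ((mem_powersetCard.1 hS2).1 (mem_insert_self a T))
lemma esF_erase (u : Finset ι) (q : ι → ℝ) (k : ℕ) :
    ((k+1 : ℕ) : ℝ) * esF u q (k+1) = ∑ j ∈ u, q j * esF (u.erase j) q k := by
  classical
  have LHS : ((k+1:ℕ):ℝ) * esF u q (k+1)
      = ∑ S ∈ u.powersetCard (k+1), ∑ j ∈ S, ∏ i ∈ S, q i := by
    rw [esF, mul_sum]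
    refine sum_congr rfl fun S hS => ?_
    rw [sum_const, (mem_powersetCard.1 hS).2, nsmul_eq_mul]
  have RHS : ∑ j ∈ u, q j * esF (u.erase j) q k
      = ∑ j ∈ u, ∑ S ∈ (u.erase j).powersetCard k, q j * ∏ i ∈ S, q i := by
    refine sum_congr rfl fun j hj => ?_
    rw [esF, mul_sum]
  rw [LHS, RHS, sum_sigma', sum_sigma']
  refine sum_nbij' (fun x => ⟨x.2, x.1.erase x.2⟩) (fun y => ⟨insert y.1 y.2, y.1⟩) ?_ ?_ ?_ ?_ ?_
  · rintro ⟨S, j⟩ hx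
    simp only [mem_sigma] at hx ⊢
    obtain ⟨hS, hj⟩ := hx
    obtain ⟨hSu, hcard⟩ := mem_powersetCard.1 hS
    refine ⟨hSu hj, mem_powersetCard.2 ⟨erase_subset_erase j hSu, ?_⟩⟩
    rw [card_erase_of_mem hj, hcard]
    rfl
  · rintro ⟨j, S⟩ hy
    simp only [mem_sigma] at hy ⊢
    obtain ⟨hj, hS⟩ := hy
    obtain ⟨hSu, hcard⟩ := mem_powersetCard.1 hS
    have hjS : j ∉ S := fun hc => (notMem_erase j u) (hSu hc)
    refine ⟨mem_powersetCard.2 ⟨?_, ?_⟩, mem_insert_self j S⟩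
    · exact insert_subset hj (hSu.trans (erase_subset j u))
    · rw [card_insert_of_notMem hjS, hcard]
  · rintro ⟨S, j⟩ hx
    simp only [mem_sigma] at hx
    obtain ⟨hS, hj⟩ := hx
    show (⟨insert j (S.erase j), j⟩ : Σ _ : Finset ι, ι) = ⟨S, j⟩
    rw [insert_erase hj]
  · rintro ⟨j, S⟩ hy
    simp only [mem_sigma] at hy
    obtain ⟨hj, hS⟩ := hy
    have hjS : j ∉ S := fun hc => (notMem_erase j u) ((mem_powersetCard.1 hS).1 hc)
    show (⟨j, (insert j S).erase j⟩ : Σ _ : ι, Finset ι) = ⟨j, S⟩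
    rw [erase_insert hjS]
  · rintro ⟨S, j⟩ hx
    simp only [mem_sigma] at hx
    exact (mul_prod_erase S q hx.2).symm

lemma pow_succ_bound : ∀ (k : ℕ) (t s : ℝ), 0 ≤ t → 0 ≤ s →
    t^(k+1) + (k+1 : ℝ)*s*t^k ≤ (t+s)^(k+1) := by
  intro k
  induction k with
  | zero => intro t s ht hs; simp
  | succ k ih =>
    intro t s ht hs
    have h1 := ih t s ht hs
    have h2 : (t+s)^(k+2) = (t+s) * (t+s)^(k+1) := by ring
    have h3 : (t+s) * (t^(k+1) + (k+1:ℝ)*s*t^k) ≤ (t+s) * (t+s)^(k+1) :=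
      mul_le_mul_of_nonneg_left h1 (by linarith)
    have h4 : t^(k+2) + ((k:ℝ)+1+1)*s*t^(k+1) ≤ (t+s) * (t^(k+1) + (k+1:ℝ)*s*t^k) := by
      have ht' : 0 ≤ t^k := pow_nonneg ht k
      have e : (t+s) * (t^(k+1) + (k+1:ℝ)*s*t^k)
          = t^(k+2) + ((k:ℝ)+1+1)*s*t^(k+1) + ((k:ℝ)+1)*(s*s*t^k) := by ring
      have pos : 0 ≤ ((k:ℝ)+1)*(s*s*t^k) := by positivity
      linarith [e.ge]
    calc t^(k+2) + ((k+1:ℕ)+1:ℝ)*s*t^(k+1) ≤ (t+s) * (t^(k+1) + (k+1:ℝ)*s*t^k) := by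
          push_cast; push_cast at h4; linarith
      _ ≤ (t+s)^(k+2) := by rw [h2]; exact h3

lemma esF_le (u : Finset ι) (q : ι → ℝ) (hq : ∀ j ∈ u, 0 ≤ q j) :
    ∀ k : ℕ, ((Nat.factorial k : ℕ) : ℝ) * esF u q k ≤ (∑ j ∈ u, q j)^k := by
  classical
  induction u using Finset.induction_on with
  | empty =>
    intro k
    cases k with
    | zero => simp [esF_zero]
    | succ k =>
      have : esF (∅ : Finset ι) q (k+1) = 0 := by
        rw [esF, powersetCard_eq_empty.2 (by simp)]
        simp
      rw [this, sum_empty, mul_zero]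
      simp
  | @insert a u ha ih =>
    intro k
    have hqa : 0 ≤ q a := hq a (mem_insert_self a u)
    have hqu : ∀ j ∈ u, 0 ≤ q j := fun j hj => hq j (mem_insert_of_mem hj)
    have hs : 0 ≤ ∑ j ∈ u, q j := sum_nonneg hqu
    cases k with
    | zero => simp [esF_zero]
    | succ k =>
      rw [esF_insert a u ha, sum_insert ha]
      have ih1 := ih hqu (k+1)
      have ih2 := ih hqu k
      have e1 : ((Nat.factorial (k+1) : ℕ):ℝ) * (esF u q (k+1) + q a * esF u q k)
          = ((Nat.factorial (k+1) : ℕ):ℝ) * esF u q (k+1)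
            + ((k+1:ℕ):ℝ) * q a * (((Nat.factorial k : ℕ):ℝ) * esF u q k) := by
        rw [Nat.factorial_succ]; push_cast; ring
      rw [e1]
      have hnn : 0 ≤ esF u q k := esF_nonneg u q hqu k
      have step : ((Nat.factorial (k+1) : ℕ):ℝ) * esF u q (k+1)
            + ((k+1:ℕ):ℝ) * q a * (((Nat.factorial k : ℕ):ℝ) * esF u q k)
          ≤ (∑ j ∈ u, q j)^(k+1) + ((k+1:ℕ):ℝ) * q a * (∑ j ∈ u, q j)^k := by
        have h5 : ((k+1:ℕ):ℝ) * q a * (((Nat.factorial k : ℕ):ℝ) * esF u q k)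
            ≤ ((k+1:ℕ):ℝ) * q a * (∑ j ∈ u, q j)^k :=
          mul_le_mul_of_nonneg_left ih2 (by positivity)
        linarith
      refine step.trans ?_
      have := pow_succ_bound k (∑ j ∈ u, q j) (q a) hs hqa
      calc (∑ j ∈ u, q j)^(k+1) + ((k+1:ℕ):ℝ) * q a * (∑ j ∈ u, q j)^k
          = (∑ j ∈ u, q j)^(k+1) + ((k:ℝ)+1) * q a * (∑ j ∈ u, q j)^k := by push_cast; ring
        _ ≤ (∑ j ∈ u, q j + q a)^(k+1) := by
            have h := pow_succ_bound k (∑ j ∈ u, q j) (q a) hs hqa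
            calc (∑ j ∈ u, q j)^(k+1) + ((k:ℝ)+1) * q a * (∑ j ∈ u, q j)^k
                ≤ ((∑ j ∈ u, q j) + q a)^(k+1) := by push_cast at h; linarith
              _ = (∑ j ∈ u, q j + q a)^(k+1) := by ring_nf
        _ = (q a + ∑ j ∈ u, q j)^(k+1) := by ring_nf

lemma esF_lower (u : Finset ι) (q : ι → ℝ) (mb : ℝ)
    (hq : ∀ j ∈ u, 0 ≤ q j) (hm : ∀ j ∈ u, q j ≤ mb) (k : ℕ) :
    (∑ j ∈ u, q j) * esF u q (k+1) - (∑ j ∈ u, q j) * mb * esF u q k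
      ≤ ((k+2:ℕ):ℝ) * esF u q (k+2) := by
  classical
  have key : ∀ j ∈ u, esF u q (k+1) - mb * esF u q k ≤ esF (u.erase j) q (k+1) := by
    intro j hj
    have hins : esF u q (k+1+1-1) = esF (u.erase j) q (k+1) + q j * esF (u.erase j) q k := by
      conv_lhs => rw [← insert_erase hj]
      exact esF_insert j (u.erase j) (notMem_erase j u) q k
    have h2 : q j * esF (u.erase j) q k ≤ mb * esF u q k := by
      have h3 : esF (u.erase j) q k ≤ esF u q k :=
        esF_mono (u.erase j) u q hq (erase_subset j u) k
      have h4 : 0 ≤ esF (u.erase j) q k :=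
        esF_nonneg _ q (fun i hi => hq i (erase_subset j u hi)) k
      exact mul_le_mul (hm j hj) h3 h4 ((hq j hj).trans (hm j hj))
    simp only [Nat.add_sub_cancel] at hins
    linarith
  have e2 : ((k+2:ℕ):ℝ) * esF u q (k+2) = ∑ j ∈ u, q j * esF (u.erase j) q (k+1) := by
    have := esF_erase u q (k+1)
    convert this using 2
  rw [e2]
  have : ∑ j ∈ u, q j * (esF u q (k+1) - mb * esF u q k)
      ≤ ∑ j ∈ u, q j * esF (u.erase j) q (k+1) :=
    sum_le_sum fun j hj => mul_le_mul_of_nonneg_left (key j hj) (hq j hj)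
  have e3 : ∑ j ∈ u, q j * (esF u q (k+1) - mb * esF u q k)
      = (∑ j ∈ u, q j) * esF u q (k+1) - (∑ j ∈ u, q j) * mb * esF u q k := by
    simp only [mul_sub]
    rw [Finset.sum_sub_distrib, ← Finset.sum_mul, ← Finset.sum_mul, mul_assoc]
  linarith


lemma esF_tendsto (lam : ℝ) (q : (n : ℕ) → Fin n → ℝ) (mb : ℕ → ℝ)
    (hq0 : ∀ n j, 0 ≤ q n j) (hqm : ∀ n j, q n j ≤ mb n)
    (hmb : Tendsto mb atTop (nhds 0))
    (hs : Tendsto (fun n => ∑ j, q n j) atTop (nhds lam)) :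
    ∀ k : ℕ, Tendsto (fun n => esF Finset.univ (q n) k) atTop
      (nhds (lam ^ k / (Nat.factorial k))) := by
  intro k
  induction k using Nat.strong_induction_on with
  | _ k ih =>
    match k with
    | 0 =>
      simp only [esF_zero, pow_zero, Nat.factorial_zero, Nat.cast_one, div_one]
      exact tendsto_const_nhds
    | 1 =>
      simp only [esF_one, pow_one, Nat.factorial_one, Nat.cast_one, div_one]
      exact hs
    | (k+2) =>
      have ih1 := ih (k+1) (by omega)
      have ih0 := ih k (by omega)
      have hU : Tendsto (fun n => (∑ j, q n j)^(k+2) / ((Nat.factorial (k+2) : ℕ):ℝ))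
          atTop (nhds (lam ^ (k+2) / (Nat.factorial (k+2)))) :=
        (hs.pow (k+2)).div_const _
      have hL : Tendsto (fun n => ((∑ j, q n j) * esF Finset.univ (q n) (k+1)
            - (∑ j, q n j) * mb n * esF Finset.univ (q n) k) / ((k+2:ℕ):ℝ))
          atTop (nhds (lam ^ (k+2) / (Nat.factorial (k+2)))) := by
        have t1 : Tendsto (fun n => (∑ j, q n j) * esF Finset.univ (q n) (k+1)
              - (∑ j, q n j) * mb n * esF Finset.univ (q n) k) atTop
            (nhds (lam * (lam^(k+1) / (Nat.factorial (k+1))) - lam * 0 * (lam^k / (Nat.factorial k)))) :=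
          ((hs.mul ih1).sub ((hs.mul hmb).mul ih0))
        have e : (lam * (lam^(k+1) / (Nat.factorial (k+1))) - lam * 0 * (lam^k / (Nat.factorial k)))
              / ((k+2:ℕ):ℝ) = lam ^ (k+2) / (Nat.factorial (k+2)) := by
          have hf1 : ((Nat.factorial (k+1) : ℕ):ℝ) ≠ 0 := by positivity
          have hf2 : ((Nat.factorial (k+2) : ℕ):ℝ) ≠ 0 := by positivity
          have hk2 : ((k+2:ℕ):ℝ) ≠ 0 := by positivity
          rw [mul_zero, zero_mul, sub_zero]
          rw [div_eq_div_iff (by positivity) hf2]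
          have : (Nat.factorial (k+2) : ℝ) = ((k+2:ℕ):ℝ) * (Nat.factorial (k+1) : ℝ) := by
            rw [Nat.factorial_succ (k+1)]; push_cast; ring
          rw [this]
          field_simp
          ring
        rw [← e]
        exact t1.div_const _
      refine tendsto_of_tendsto_of_tendsto_of_le_of_le hL hU ?_ ?_
      · intro n
        show ((∑ j, q n j) * esF Finset.univ (q n) (k+1)
            - (∑ j, q n j) * mb n * esF Finset.univ (q n) k) / ((k+2:ℕ):ℝ)
            ≤ esF Finset.univ (q n) (k+2)
        rw [div_le_iff₀ (by positivity : (0:ℝ) < ((k+2:ℕ):ℝ))]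
        have := esF_lower (Finset.univ : Finset (Fin n)) (q n) (mb n)
          (fun j _ => hq0 n j) (fun j _ => hqm n j) k
        linarith [this]
      · intro n
        have h := esF_le (Finset.univ : Finset (Fin n)) (q n) (fun j _ => hq0 n j) (k+2)
        show esF Finset.univ (q n) (k+2) ≤ (∑ j, q n j)^(k+2) / ((Nat.factorial (k+2):ℕ):ℝ)
        rw [le_div_iff₀ (by positivity : (0:ℝ) < ((Nat.factorial (k+2):ℕ):ℝ))]
        linarith [h]

lemma exp_neg_le_one_sub {x : ℝ} (hx0 : 0 ≤ x) (hx : x ≤ 1/4) :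
    Real.exp (-(x + x^2)) ≤ 1 - x := by
  have h1 : 1 + (x + x^2)/2 ≤ Real.exp ((x + x^2)/2) := by
    have := Real.add_one_le_exp ((x + x^2)/2)
    linarith
  have h2 : Real.exp ((x + x^2)/2) ^ 2 = Real.exp (x + x^2) := by
    rw [← Real.exp_nat_mul]
    congr 1
    push_cast
    ring
  have h3 : (1 + (x + x^2)/2)^2 ≤ Real.exp (x + x^2) := by
    rw [← h2]
    have hnn : 0 ≤ 1 + (x + x^2)/2 := by nlinarith
    exact pow_le_pow_left₀ hnn h1 2
  have key : 1 ≤ (1 - x) * Real.exp (x + x^2) := by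
    have hx2 : 0 ≤ x^2 := sq_nonneg x
    have hx3 : x^3 ≤ x^2/4 := by nlinarith
    have hx4 : x^4 ≤ x^2/16 := by nlinarith [sq_nonneg x]
    have hx5 : x^5 ≤ x^2/64 := by nlinarith [sq_nonneg x, sq_nonneg (x^2)]
    have hstep : 1 ≤ (1 - x) * (1 + (x + x^2)/2)^2 := by nlinarith [hx2, hx3, hx4, hx5]
    nlinarith [Real.exp_pos (x + x^2)]
  rw [Real.exp_neg, inv_eq_one_div, div_le_iff₀ (Real.exp_pos _)]
  linarith

lemma pb_ge {n : ℕ} (q : Fin n → ℝ) (k : ℕ) (hq0 : ∀ j, 0 ≤ q j) (hq1 : ∀ j, q j ≤ 1) :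
    esF Finset.univ q k * ∏ j, (1 - q j) ≤ pbPMF q k := by
  rw [esF, pbPMF, sum_mul]
  refine sum_le_sum fun S hS => ?_
  have hSq : 0 ≤ ∏ j ∈ S, q j := prod_nonneg fun j _ => hq0 j
  refine mul_le_mul_of_nonneg_left ?_ hSq
  have hsplit : (∏ j ∈ Finset.univ \ S, (1 - q j)) * ∏ j ∈ S, (1 - q j)
      = ∏ j, (1 - q j) := Finset.prod_sdiff (subset_univ S)
  have h1 : ∏ j ∈ S, (1 - q j) ≤ 1 :=
    Finset.prod_le_one (fun j _ => by linarith [hq1 j]) (fun j _ => by linarith [hq0 j])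
  have h2 : 0 ≤ ∏ j ∈ Finset.univ \ S, (1 - q j) :=
    prod_nonneg fun j _ => by linarith [hq1 j]
  nlinarith [hsplit]

lemma pb_le {n : ℕ} (q : Fin n → ℝ) (k : ℕ) (mb : ℝ) (hq0 : ∀ j, 0 ≤ q j)
    (hqm : ∀ j, q j ≤ mb) (hmb1 : mb ≤ 1/2) :
    pbPMF q k * (1 - mb)^k ≤ esF Finset.univ q k * ∏ j, (1 - q j) := by
  rw [esF, pbPMF, sum_mul, sum_mul]
  refine sum_le_sum fun S hS => ?_
  have hSq : 0 ≤ ∏ j ∈ S, q j := prod_nonneg fun j _ => hq0 j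
  have hcard : S.card = k := (mem_powersetCard.1 hS).2
  have hsplit : (∏ j ∈ Finset.univ \ S, (1 - q j)) * ∏ j ∈ S, (1 - q j)
      = ∏ j, (1 - q j) := Finset.prod_sdiff (subset_univ S)
  have h1 : (1 - mb)^k ≤ ∏ j ∈ S, (1 - q j) := by
    rw [← hcard]
    rw [← Finset.prod_const]
    refine Finset.prod_le_prod (fun j _ => by linarith) (fun j _ => by linarith [hqm j])
  have h2 : 0 ≤ ∏ j ∈ Finset.univ \ S, (1 - q j) :=
    prod_nonneg fun j _ => by linarith [(hqm j).trans hmb1]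
  calc ((∏ j ∈ S, q j) * ∏ j ∈ Finset.univ \ S, (1 - q j)) * (1 - mb)^k
      ≤ ((∏ j ∈ S, q j) * ∏ j ∈ Finset.univ \ S, (1 - q j)) * ∏ j ∈ S, (1 - q j) := by
        refine mul_le_mul_of_nonneg_left h1 (mul_nonneg hSq h2)
    _ = (∏ j ∈ S, q j) * ∏ j, (1 - q j) := by rw [mul_assoc, hsplit]

lemma prod_one_sub_le_exp {n : ℕ} (q : Fin n → ℝ) (hq1 : ∀ j, q j ≤ 1) :
    ∏ j, (1 - q j) ≤ Real.exp (-(∑ j, q j)) := by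
  have : ∀ j : Fin n, (1 : ℝ) - q j ≤ Real.exp (-(q j)) := fun j => by
    have := Real.add_one_le_exp (-(q j)); linarith
  calc ∏ j, (1 - q j) ≤ ∏ j, Real.exp (-(q j)) :=
        Finset.prod_le_prod (fun j _ => by linarith [hq1 j]) (fun j _ => this j)
    _ = Real.exp (∑ j, -(q j)) := (Real.exp_sum _ _).symm
    _ = Real.exp (-(∑ j, q j)) := by rw [← Finset.sum_neg_distrib]

lemma exp_le_prod_one_sub {n : ℕ} (q : Fin n → ℝ) (hq0 : ∀ j, 0 ≤ q j)
    (hq14 : ∀ j, q j ≤ 1/4) :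
    Real.exp (-(∑ j, (q j + (q j)^2))) ≤ ∏ j, (1 - q j) := by
  calc Real.exp (-(∑ j, (q j + (q j)^2))) = Real.exp (∑ j, -(q j + (q j)^2)) := by
        rw [← Finset.sum_neg_distrib]
    _ = ∏ j, Real.exp (-(q j + (q j)^2)) := Real.exp_sum _ _
    _ ≤ ∏ j, (1 - q j) := by
        refine Finset.prod_le_prod (fun j _ => (Real.exp_pos _).le) (fun j _ => ?_)
        exact exp_neg_le_one_sub (hq0 j) (hq14 j)

lemma poissonPMF_nonneg {r : ℝ} (hr : 0 ≤ r) (k : ℕ) : 0 ≤ poissonPMF r k :=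
  div_nonneg (mul_nonneg (Real.exp_pos _).le (pow_nonneg hr k)) (Nat.cast_nonneg _)

lemma poissonPMF_le_one {r : ℝ} (hr : 0 ≤ r) (k : ℕ) : poissonPMF r k ≤ 1 := by
  have h := Real.pow_div_factorial_le_exp _ hr k
  have : poissonPMF r k = Real.exp (-r) * (r^k / (Nat.factorial k)) := by
    rw [_root_.poissonPMF, mul_div_assoc]
  rw [this]
  calc Real.exp (-r) * (r^k / (Nat.factorial k)) ≤ Real.exp (-r) * Real.exp r :=
        mul_le_mul_of_nonneg_left h (Real.exp_pos _).le
    _ = 1 := by rw [← Real.exp_add, neg_add_cancel, Real.exp_zero]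

lemma poissonPMF_continuous (k : ℕ) : Continuous fun r : ℝ => poissonPMF r k := by
  simp only [_root_.poissonPMF]
  exact ((Real.continuous_exp.comp continuous_neg).mul (continuous_pow k)).div_const _

lemma pbPMF_nonneg {n : ℕ} (q : Fin n → ℝ) (k : ℕ) (hq0 : ∀ j, 0 ≤ q j)
    (hq1 : ∀ j, q j ≤ 1) : 0 ≤ pbPMF q k := by
  refine sum_nonneg fun S _ => mul_nonneg (prod_nonneg fun j _ => hq0 j)
    (prod_nonneg fun j _ => by linarith [hq1 j])

lemma pbPMF_le_one {n : ℕ} (q : Fin n → ℝ) (k : ℕ) (hq0 : ∀ j, 0 ≤ q j)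
    (hq1 : ∀ j, q j ≤ 1) : pbPMF q k ≤ 1 := by
  have h1 : pbPMF q k ≤ ∑ S ∈ (Finset.univ : Finset (Fin n)).powerset,
      (∏ j ∈ S, q j) * ∏ j ∈ Finset.univ \ S, (1 - q j) := by
    refine sum_le_sum_of_subset_of_nonneg ?_ fun S _ _ =>
      mul_nonneg (prod_nonneg fun j _ => hq0 j) (prod_nonneg fun j _ => by linarith [hq1 j])
    intro S hS
    exact mem_powerset.2 (mem_powersetCard.1 hS).1
  have h2 : ∑ S ∈ (Finset.univ : Finset (Fin n)).powerset,
      (∏ j ∈ S, q j) * ∏ j ∈ Finset.univ \ S, (1 - q j) = 1 := by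
    rw [← Finset.prod_add]
    simp
  linarith

lemma pb_tendsto (lam : ℝ) (q : (n : ℕ) → Fin n → ℝ) (k : ℕ)
    (hq0 : ∀ n j, 0 ≤ q n j)
    (hmax : ∀ ε : ℝ, 0 < ε → ∀ᶠ n in atTop, ∀ j, q n j ≤ ε)
    (hs : Tendsto (fun n => ∑ j, q n j) atTop (nhds lam)) :
    Tendsto (fun n => pbPMF (q n) k) atTop (nhds (poissonPMF lam k)) := by
  classical
  set mb : ℕ → ℝ := fun n => ((Finset.univ.sup fun j : Fin n => Real.toNNReal (q n j) : NNReal) : ℝ) with hmbdef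
  have hmb0 : ∀ n, 0 ≤ mb n := fun n => NNReal.coe_nonneg _
  have hqmb : ∀ n j, q n j ≤ mb n := fun n j => by
    calc q n j ≤ (Real.toNNReal (q n j) : ℝ) := Real.le_coe_toNNReal _
      _ ≤ mb n := NNReal.coe_le_coe.2 (Finset.le_sup (f := fun j : Fin n => Real.toNNReal (q n j)) (mem_univ j))
  have hmbsmall : ∀ ε : ℝ, 0 < ε → ∀ᶠ n in atTop, mb n ≤ ε := by
    intro ε hε
    filter_upwards [hmax ε hε] with n hn
    have h1 : (Finset.univ.sup fun j : Fin n => Real.toNNReal (q n j)) ≤ Real.toNNReal ε :=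
      Finset.sup_le fun j _ => Real.toNNReal_le_toNNReal (hn j)
    calc mb n ≤ (Real.toNNReal ε : ℝ) := NNReal.coe_le_coe.2 h1
      _ = ε := Real.coe_toNNReal _ hε.le
  have hmb : Tendsto mb atTop (nhds 0) := by
    rw [Metric.tendsto_atTop]
    intro ε hε
    obtain ⟨N, hN⟩ := eventually_atTop.1 (hmbsmall (ε/2) (by linarith))
    refine ⟨N, fun n hn => ?_⟩
    rw [Real.dist_eq, sub_zero, abs_of_nonneg (hmb0 n)]
    linarith [hN n hn]
  have hesF := esF_tendsto lam q mb hq0 hqmb hmb hs k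
  -- squeeze
  have hlow : Tendsto (fun n => esF Finset.univ (q n) k
      * Real.exp (-((∑ j, q n j) + mb n * (∑ j, q n j)))) atTop
      (nhds (poissonPMF lam k)) := by
    have hexp : Tendsto (fun n => Real.exp (-((∑ j, q n j) + mb n * (∑ j, q n j)))) atTop
        (nhds (Real.exp (-(lam + 0 * lam)))) :=
      (Real.continuous_exp.tendsto _).comp ((hs.add (hmb.mul hs)).neg)
    have := hesF.mul hexp
    have e : lam ^ k / (Nat.factorial k) * Real.exp (-(lam + 0 * lam)) = poissonPMF lam k := by
      rw [_root_.poissonPMF]; rw [zero_mul, add_zero]; ring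
    rwa [e] at this
  have hup : Tendsto (fun n => esF Finset.univ (q n) k
      * Real.exp (-(∑ j, q n j)) / (1 - mb n)^k) atTop (nhds (poissonPMF lam k)) := by
    have hexp : Tendsto (fun n => esF Finset.univ (q n) k * Real.exp (-(∑ j, q n j))) atTop
        (nhds (lam ^ k / (Nat.factorial k) * Real.exp (-lam))) :=
      hesF.mul ((Real.continuous_exp.tendsto _).comp hs.neg)
    have hden : Tendsto (fun n => (1 - mb n)^k) atTop (nhds ((1 - (0:ℝ))^k)) :=
      (tendsto_const_nhds.sub hmb).pow k
    have hden1 : ((1:ℝ) - 0)^k = 1 := by norm_num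
    rw [hden1] at hden
    have := hexp.div hden one_ne_zero
    have e : lam ^ k / (Nat.factorial k) * Real.exp (-lam) / 1 = poissonPMF lam k := by
      rw [_root_.poissonPMF]; ring
    rwa [e] at this
  refine tendsto_of_tendsto_of_tendsto_of_le_of_le' hlow hup ?_ ?_
  · filter_upwards [hmax (1/4) (by norm_num)] with n hn
    have hq14 : ∀ j, q n j ≤ 1/4 := hn
    have hq1 : ∀ j, q n j ≤ 1 := fun j => (hq14 j).trans (by norm_num)
    have h1 : Real.exp (-((∑ j, q n j) + mb n * (∑ j, q n j)))
        ≤ Real.exp (-(∑ j, (q n j + (q n j)^2))) := by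
      apply Real.exp_le_exp.2
      rw [neg_le_neg_iff]
      rw [Finset.sum_add_distrib]
      have : ∑ j, (q n j)^2 ≤ mb n * (∑ j, q n j) := by
        rw [Finset.mul_sum]
        refine sum_le_sum fun j _ => ?_
        rw [pow_two]
        exact mul_le_mul_of_nonneg_right (hqmb n j) (hq0 n j)
      linarith
    have h2 := exp_le_prod_one_sub (q n) (hq0 n) hq14
    have h3 := pb_ge (q n) k (hq0 n) hq1
    have hesFnn : 0 ≤ esF Finset.univ (q n) k := esF_nonneg _ _ (fun j _ => hq0 n j) k
    calc esF Finset.univ (q n) k * Real.exp (-((∑ j, q n j) + mb n * (∑ j, q n j)))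
        ≤ esF Finset.univ (q n) k * ∏ j, (1 - q n j) :=
          mul_le_mul_of_nonneg_left (h1.trans h2) hesFnn
      _ ≤ pbPMF (q n) k := h3
  · filter_upwards [hmbsmall (1/4) (by norm_num)] with n hn
    have hq14 : ∀ j, q n j ≤ 1/4 := fun j => (hqmb n j).trans hn
    have hq1 : ∀ j, q n j ≤ 1 := fun j => (hq14 j).trans (by norm_num)
    have hden : (0:ℝ) < (1 - mb n)^k := pow_pos (by linarith) k
    rw [le_div_iff₀ hden]
    have h4 := pb_le (q n) k (mb n) (hq0 n) (hqmb n) (by linarith)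
    have h5 := prod_one_sub_le_exp (q n) hq1
    have hesFnn : 0 ≤ esF Finset.univ (q n) k := esF_nonneg _ _ (fun j _ => hq0 n j) k
    calc pbPMF (q n) k * (1 - mb n)^k
        ≤ esF Finset.univ (q n) k * ∏ j, (1 - q n j) := h4
      _ ≤ esF Finset.univ (q n) k * Real.exp (-(∑ j, q n j)) :=
          mul_le_mul_of_nonneg_left h5 hesFnn

end Stmt0Aux


namespace Stmt0AuxB

lemma last_div_tendsto (a : ℕ → ℝ) (mu : ℝ)
    (h : Tendsto (fun n => (∑ i ∈ range n, a i) / n) atTop (nhds mu)) :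
    Tendsto (fun n => a n / n) atTop (nhds 0) := by
  set A : ℕ → ℝ := fun n => (∑ i ∈ range n, a i) / n with hA
  have hB : Tendsto (fun n : ℕ => (1 + 1/(n:ℝ)) * A (n+1) - A n) atTop
      (nhds ((1 + 0) * mu - mu)) := by
    exact ((tendsto_const_nhds.add tendsto_one_div_atTop_nhds_zero_nat).mul
      (h.comp (tendsto_add_atTop_nat 1))).sub h
  have heq : ∀ᶠ n : ℕ in atTop, (1 + 1/(n:ℝ)) * A (n+1) - A n = a n / n := by
    filter_upwards [eventually_ge_atTop 1] with n hn
    have hn0 : (n:ℝ) ≠ 0 := Nat.cast_ne_zero.2 (by omega : n ≠ 0)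
    have hn1 : ((n:ℝ)+1) ≠ 0 := by positivity
    rw [hA]
    simp only []
    rw [Finset.sum_range_succ]
    push_cast
    field_simp
    ring
  have : Tendsto (fun n : ℕ => (1 + 1/(n:ℝ)) * A (n+1) - A n) atTop (nhds 0) := by
    simpa using hB
  exact this.congr' heq

lemma max_bound (a : ℕ → ℝ) (ha : ∀ n, 0 ≤ a n)
    (h : Tendsto (fun n => a n / n) atTop (nhds 0)) {t : ℝ} (ht : 0 < t) :
    ∀ᶠ n in atTop, ∀ j < n, a j ≤ t * n := by
  have h2 : ∀ᶠ j in atTop, a j / j ≤ t/2 := by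
    have := h.eventually (eventually_le_nhds (by linarith : (0:ℝ) < t/2))
    exact this
  obtain ⟨N, hN⟩ := eventually_atTop.1 (h2.and (eventually_ge_atTop 1))
  set C : ℝ := ∑ i ∈ range N, a i with hC
  have hCb : ∀ j < N, a j ≤ C :=
    fun j hj => Finset.single_le_sum (fun i _ => ha i) (mem_range.2 hj)
  have hev : ∀ᶠ n : ℕ in atTop, C ≤ t * n := by
    have hcast : Tendsto (fun n : ℕ => t * (n:ℝ)) atTop atTop :=
      (tendsto_natCast_atTop_atTop).const_mul_atTop ht
    exact hcast.eventually_ge_atTop C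
  filter_upwards [hev, eventually_ge_atTop N] with n hn hnN
  intro j hj
  by_cases hjN : j < N
  · exact (hCb j hjN).trans hn
  · push_neg at hjN
    obtain ⟨hj2, hj1⟩ := hN j hjN
    have hj0 : (0:ℝ) < j := by exact_mod_cast hj1
    have : a j ≤ t/2 * j := by
      rw [div_le_iff₀ hj0] at hj2
      linarith
    have hjn : (j:ℝ) ≤ n := Nat.cast_le.2 hj.le
    nlinarith

lemma rpow_tendsto {p : ℝ} (hp : 0 < p) :
    Tendsto (fun t : ℝ => t ^ p) (nhdsWithin 0 (Set.Ioi 0)) (nhds 0) := by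
  have := (Real.continuousAt_rpow_const 0 p (Or.inr hp.le)).tendsto
  rw [Real.zero_rpow hp.ne'] at this
  exact this.mono_left nhdsWithin_le_nhds


lemma layer_key (gl : ℝ → ℝ) (cl M δ ν : ℝ) (hM : 0 < M) (hδ : 0 < δ) (hν : 0 < ν)
    (hcl0 : 0 ≤ cl)
    (hC1 : ∀ x : ℝ, 0 ≤ x → x < δ → |gl x - cl * x| ≤ M * x ^ (1 + ν))
    (a : ℕ → ℝ) (ha : ∀ i, 0 ≤ a i)
    (hcase : (∀ i, a i = 0) ∨ (∃ mu : ℝ, 0 < mu ∧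
      Tendsto (fun n => (∑ i ∈ range n, a i) / n) atTop (nhds mu))) :
    Tendsto (fun n => ∑ j ∈ range n, gl (a 0 * a j / (∑ i ∈ range n, a i))) atTop
      (nhds (cl * a 0))
    ∧ ∀ ε : ℝ, 0 < ε → ∀ᶠ n in atTop, ∀ j ∈ range n,
        gl (a 0 * a j / (∑ i ∈ range n, a i)) ≤ ε := by
  have h1ν : (0:ℝ) < 1 + ν := by linarith
  have hg0 : gl 0 = 0 := by
    have := hC1 0 le_rfl hδ
    rw [Real.zero_rpow h1ν.ne', mul_zero, mul_zero, sub_zero] at this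
    exact abs_eq_zero.1 (le_antisymm this (abs_nonneg _))
  -- trivial subcase : a 0 = 0 or all zero
  by_cases h0 : a 0 = 0
  · constructor
    · have : ∀ n : ℕ, ∑ j ∈ range n, gl (a 0 * a j / (∑ i ∈ range n, a i)) = 0 := by
        intro n
        refine Finset.sum_eq_zero fun j _ => ?_
        rw [h0, zero_mul, zero_div, hg0]
      have ht0 : Tendsto (fun n : ℕ => ∑ j ∈ range n,
          gl (a 0 * a j / (∑ i ∈ range n, a i))) atTop (nhds 0) :=
        (tendsto_const_nhds : Tendsto (fun _ : ℕ => (0:ℝ)) atTop (nhds 0)).congr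
          fun n => (this n).symm
      rw [h0, mul_zero]
      rw [h0] at ht0
      exact ht0
    · intro ε hε
      refine Eventually.of_forall fun n => fun j _ => ?_
      rw [h0, zero_mul, zero_div, hg0]
      exact hε.le
  -- now a 0 > 0; the all-zero case is impossible
  have ha0 : 0 < a 0 := lt_of_le_of_ne (ha 0) (Ne.symm h0)
  rcases hcase with hzero | ⟨mu, hmu, havg⟩
  · exact absurd (hzero 0) h0
  set T : ℕ → ℝ := fun n => ∑ i ∈ range n, a i with hT
  have hTmono : ∀ n j, j ∈ range n → 0 ≤ a 0 * a j / T n := by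
    intro n j _
    have hTnn : 0 ≤ T n := Finset.sum_nonneg fun i _ => ha i
    exact div_nonneg (mul_nonneg (ha 0) (ha j)) hTnn
  have hTbig : ∀ᶠ n : ℕ in atTop, (mu/2) * n ≤ T n ∧ 1 ≤ n := by
    have hA : ∀ᶠ n : ℕ in atTop, mu/2 < T n / n :=
      havg.eventually (eventually_gt_nhds (by linarith : mu/2 < mu))
    filter_upwards [hA, eventually_ge_atTop 1] with n hn h1
    refine ⟨?_, h1⟩
    have hn0 : (0:ℝ) < n := by exact_mod_cast h1
    rw [lt_div_iff₀ hn0] at hn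
    linarith
  have hTpos : ∀ᶠ n : ℕ in atTop, 0 < T n := by
    filter_upwards [hTbig] with n ⟨h1, h2⟩
    have hn0 : (0:ℝ) < n := by exact_mod_cast h2
    nlinarith
  have hlast := last_div_tendsto a mu havg
  -- main smallness claim
  have maxb : ∀ t : ℝ, 0 < t → ∀ᶠ n : ℕ in atTop,
      0 < T n ∧ ∀ j ∈ range n, a 0 * a j / T n ≤ t := by
    intro t htpos
    have ht2 : 0 < t * (mu/2) / a 0 := by positivity
    filter_upwards [hTbig, hTpos, max_bound a ha hlast ht2] with n hTb hTp hmb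
    refine ⟨hTp, fun j hj => ?_⟩
    rw [div_le_iff₀ hTp]
    have hj' := hmb j (mem_range.1 hj)
    have : a 0 * a j ≤ a 0 * (t * (mu/2) / a 0 * n) :=
      mul_le_mul_of_nonneg_left hj' (ha 0)
    have e : a 0 * (t * (mu/2) / a 0 * n) = t * ((mu/2) * n) := by
      field_simp
    rw [e] at this
    have h6 : t * ((mu/2) * n) ≤ t * T n := mul_le_mul_of_nonneg_left hTb.1 htpos.le
    linarith
  constructor
  · -- H1
    rw [Metric.tendsto_atTop]
    intro ε hε
    -- choose t
    have htend2 : Tendsto (fun t : ℝ => M * t ^ ν * a 0) (nhdsWithin 0 (Set.Ioi 0)) (nhds 0) := by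
      have := ((rpow_tendsto hν).const_mul M).mul_const (a 0)
      simpa using this
    have h1 : ∀ᶠ t in nhdsWithin (0:ℝ) (Set.Ioi 0), M * t ^ ν * a 0 < ε :=
      htend2.eventually (eventually_lt_nhds hε)
    have h2 : ∀ᶠ t in nhdsWithin (0:ℝ) (Set.Ioi 0), t < δ :=
      eventually_nhdsWithin_of_eventually_nhds (eventually_lt_nhds hδ)
    obtain ⟨t, htb, htδ, ht0⟩ := (h1.and (h2.and eventually_mem_nhdsWithin)).exists
    have ht0' : (0:ℝ) < t := ht0
    obtain ⟨N, hN⟩ := eventually_atTop.1 (maxb t ht0')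
    refine ⟨N, fun n hn => ?_⟩
    obtain ⟨hTp, hxb⟩ := hN n hn
    rw [Real.dist_eq]
    have hsumx : ∑ j ∈ range n, a 0 * a j / T n = a 0 := by
      rw [← Finset.sum_div, ← Finset.mul_sum, mul_div_assoc, div_self hTp.ne', mul_one]
    have key : |(∑ j ∈ range n, gl (a 0 * a j / T n)) - cl * a 0| ≤ M * t ^ ν * a 0 := by
      have e1 : (∑ j ∈ range n, gl (a 0 * a j / T n)) - cl * a 0
          = ∑ j ∈ range n, (gl (a 0 * a j / T n) - cl * (a 0 * a j / T n)) := by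
        rw [Finset.sum_sub_distrib, ← Finset.mul_sum, hsumx]
      rw [e1]
      calc |∑ j ∈ range n, (gl (a 0 * a j / T n) - cl * (a 0 * a j / T n))|
          ≤ ∑ j ∈ range n, |gl (a 0 * a j / T n) - cl * (a 0 * a j / T n)| :=
            Finset.abs_sum_le_sum_abs _ _
        _ ≤ ∑ j ∈ range n, M * t ^ ν * (a 0 * a j / T n) := by
            refine Finset.sum_le_sum fun j hj => ?_
            have hx0 := hTmono n j hj
            have hxt := hxb j hj
            have hxδ : a 0 * a j / T n < δ := lt_of_le_of_lt hxt htδ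
            refine (hC1 _ hx0 hxδ).trans ?_
            have e2 : (a 0 * a j / T n) ^ (1+ν)
                = (a 0 * a j / T n) * (a 0 * a j / T n) ^ ν := by
              rw [Real.rpow_add' hx0 (by linarith), Real.rpow_one]
            rw [e2]
            have e3 : (a 0 * a j / T n) ^ ν ≤ t ^ ν := Real.rpow_le_rpow hx0 hxt hν.le
            calc M * ((a 0 * a j / T n) * (a 0 * a j / T n) ^ ν)
                ≤ M * ((a 0 * a j / T n) * t ^ ν) := by
                  refine mul_le_mul_of_nonneg_left (mul_le_mul_of_nonneg_left e3 hx0) hM.le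
              _ = M * t ^ ν * (a 0 * a j / T n) := by ring
        _ = M * t ^ ν * a 0 := by rw [← Finset.mul_sum, hsumx]
    calc |(∑ j ∈ range n, gl (a 0 * a j / T n)) - cl * a 0| ≤ M * t ^ ν * a 0 := key
      _ < ε := htb
  · -- H2
    intro ε hε
    have htend : Tendsto (fun t : ℝ => cl * t + M * t ^ (1+ν)) (nhdsWithin 0 (Set.Ioi 0))
        (nhds 0) := by
      have hA : Tendsto (fun t : ℝ => cl * t) (nhdsWithin 0 (Set.Ioi 0)) (nhds 0) := by
        have : Tendsto (fun t : ℝ => cl * t) (nhds 0) (nhds (cl * 0)) :=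
          (continuous_const.mul continuous_id).tendsto 0
        rw [mul_zero] at this
        exact this.mono_left nhdsWithin_le_nhds
      have hB := (rpow_tendsto h1ν).const_mul M
      rw [mul_zero] at hB
      simpa using hA.add hB
    have h1 : ∀ᶠ t in nhdsWithin (0:ℝ) (Set.Ioi 0), cl * t + M * t ^ (1+ν) < ε :=
      htend.eventually (eventually_lt_nhds hε)
    have h2 : ∀ᶠ t in nhdsWithin (0:ℝ) (Set.Ioi 0), t < δ :=
      eventually_nhdsWithin_of_eventually_nhds (eventually_lt_nhds hδ)
    obtain ⟨t, htb, htδ, ht0⟩ := (h1.and (h2.and eventually_mem_nhdsWithin)).exists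
    have ht0' : (0:ℝ) < t := ht0
    filter_upwards [maxb t ht0'] with n hn
    intro j hj
    obtain ⟨hTp, hxb⟩ := hn
    have hx0 := hTmono n j hj
    have hxt := hxb j hj
    have hxδ : a 0 * a j / T n < δ := lt_of_le_of_lt hxt htδ
    have hb := hC1 _ hx0 hxδ
    have hb2 : gl (a 0 * a j / T n) ≤ cl * (a 0 * a j / T n) + M * (a 0 * a j / T n) ^ (1+ν) := by
      have := abs_le.1 hb
      linarith [this.2]
    have e3 : (a 0 * a j / T n) ^ (1+ν) ≤ t ^ (1+ν) := Real.rpow_le_rpow hx0 hxt h1ν.le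
    have : gl (a 0 * a j / T n) ≤ cl * t + M * t ^ (1+ν) := by
      have hc : cl * (a 0 * a j / T n) ≤ cl * t := mul_le_mul_of_nonneg_left hxt hcl0
      have hm : M * (a 0 * a j / T n) ^ (1+ν) ≤ M * t ^ (1+ν) :=
        mul_le_mul_of_nonneg_left e3 hM.le
      linarith
    linarith

end Stmt0AuxB


/-- Lemma `typdeg`: In the MIRG model, under (C1) and `E[‖W₁‖₁] < ∞`,
for every `m ∈ ℤ₊^L`, `P(D₁(n) = m) → E[∏_l (c_l W_{1l})^{m_l} e^{−c_l W_{1l}}/m_l!]`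
as `n → ∞`.  The conditional law of the degree vector `D₁(n)` given the weights
(independent coordinates, Poisson in layers `L1`, Poisson-binomial in the other
layers) is encoded by the hypothesis `hD`. -/
theorem stmt0 {Ω : Type} [MeasurableSpace Ω] (P : Measure Ω) [IsProbabilityMeasure P]
    (L : ℕ) (hL : 1 ≤ L) (L1 : Finset (Fin L))
    (W : ℕ → Ω → Fin L → ℝ)
    (hWmeas : ∀ i, Measurable (W i))
    (hWindep : iIndepFun W P)
    (hWident : ∀ i, Measure.map (W i) P = Measure.map (W 0) P)
    (hWnonneg : ∀ i ω l, 0 ≤ W i ω l)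
    (hWcont : ∀ x : Fin L → ℝ, P {ω | W 0 ω = x} = 0)
    (hWint : Integrable (fun ω => ∑ l, W 0 ω l) P)
    (g : Fin L → ℝ → ℝ) (c : Fin L → ℝ) (M δ ν : ℝ)
    (hgmeas : ∀ l, Measurable (g l))
    (hgnonneg : ∀ l x, 0 ≤ x → 0 ≤ g l x)
    (hgle1 : ∀ l, l ∉ L1 → ∀ x : ℝ, 0 ≤ x → g l x ≤ 1)
    (hc : ∀ l, 0 < c l) (hM : 0 < M) (hδ : 0 < δ) (hν : 0 < ν)
    (hC1 : ∀ l, ∀ x : ℝ, 0 ≤ x → x < δ → |g l x - c l * x| ≤ M * x ^ (1 + ν))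
    (D : ℕ → Ω → Fin L → ℕ)
    (hDmeas : ∀ n, Measurable (D n))
    -- conditional law of D₁(n) given the weights: independent coordinates,
    -- Poisson(Σ_j g_l(W_{1l}W_{jl}/T_l(n))) for l ∈ L1, Poisson-binomial otherwise
    (hD : ∀ n : ℕ, ∀ m : Fin L → ℕ, ∀ s : Set (ℕ → Fin L → ℝ), MeasurableSet s →
      P ({ω | D n ω = m} ∩ {ω | (fun i => W i ω) ∈ s})
        = ∫⁻ ω in {ω | (fun i => W i ω) ∈ s},
            ENNReal.ofReal (∏ l,
              if l ∈ L1 then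
                poissonPMF (∑ j ∈ Finset.range n,
                  g l (W 0 ω l * W j ω l / (∑ i ∈ Finset.range n, W i ω l))) (m l)
              else
                pbPMF (fun j : Fin n =>
                  g l (W 0 ω l * W (j : ℕ) ω l / (∑ i ∈ Finset.range n, W i ω l))) (m l)) ∂P)
    (m : Fin L → ℕ) :
    Tendsto (fun n : ℕ => (P {ω | D n ω = m}).toReal)
      atTop
      (nhds ((∫⁻ ω, ENNReal.ofReal (∏ l, poissonPMF (c l * W 0 ω l) (m l)) ∂P).toReal)) := by
  classical
  have hXmeas : ∀ (i : ℕ) (l : Fin L), Measurable fun ω => W i ω l :=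
    fun i l => (measurable_pi_apply l).comp (hWmeas i)
  have hXnn : ∀ (n i : ℕ) (l : Fin L) (ω : Ω),
      0 ≤ W 0 ω l * W i ω l / (∑ i ∈ Finset.range n, W i ω l) := by
    intro n i l ω
    exact div_nonneg (mul_nonneg (hWnonneg 0 ω l) (hWnonneg i ω l))
      (Finset.sum_nonneg fun i _ => hWnonneg i ω l)
  -- the integrand sequence and limit
  set F : ℕ → Ω → ENNReal := fun n ω => ENNReal.ofReal (∏ l,
      if l ∈ L1 then
        poissonPMF (∑ j ∈ Finset.range n,
          g l (W 0 ω l * W j ω l / (∑ i ∈ Finset.range n, W i ω l))) (m l)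
      else
        pbPMF (fun j : Fin n =>
          g l (W 0 ω l * W (j : ℕ) ω l / (∑ i ∈ Finset.range n, W i ω l))) (m l)) with hFdef
  set Flim : Ω → ENNReal :=
    fun ω => ENNReal.ofReal (∏ l, poissonPMF (c l * W 0 ω l) (m l)) with hFlimdef
  -- identification of the probability with the lintegral
  have hPn : ∀ n, P {ω | D n ω = m} = ∫⁻ ω, F n ω ∂P := by
    intro n
    have h := hD n m Set.univ MeasurableSet.univ
    have e1 : {ω | (fun i => W i ω) ∈ (Set.univ : Set (ℕ → Fin L → ℝ))} = Set.univ := by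
      ext ω; simp
    rw [e1, Set.inter_univ, Measure.restrict_univ] at h
    exact h
  -- measurability
  have hratemeas : ∀ (n : ℕ) (l : Fin L) (j : ℕ), Measurable fun ω =>
      g l (W 0 ω l * W j ω l / (∑ i ∈ Finset.range n, W i ω l)) := by
    intro n l j
    exact (hgmeas l).comp (((hXmeas 0 l).mul (hXmeas j l)).div
      (Finset.measurable_sum _ fun i _ => hXmeas i l))
  have hFmeas : ∀ n, Measurable (F n) := by
    intro n
    apply ENNReal.measurable_ofReal.comp
    apply Finset.measurable_prod
    intro l _
    by_cases hl : l ∈ L1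
    · simp only [if_pos hl]
      exact (Stmt0Aux.poissonPMF_continuous (m l)).measurable.comp
        (Finset.measurable_sum _ fun j _ => hratemeas n l j)
    · simp only [if_neg hl, pbPMF]
      apply Finset.measurable_sum
      intro S _
      refine Measurable.mul ?_ ?_
      · exact Finset.measurable_prod _ fun j _ => hratemeas n l (j : ℕ)
      · exact Finset.measurable_prod _ fun j _ => measurable_const.sub (hratemeas n l (j : ℕ))
  -- bound
  have hfac : ∀ (n : ℕ) (l : Fin L) (ω : Ω),
      0 ≤ (if l ∈ L1 then
        poissonPMF (∑ j ∈ Finset.range n,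
          g l (W 0 ω l * W j ω l / (∑ i ∈ Finset.range n, W i ω l))) (m l)
      else
        pbPMF (fun j : Fin n =>
          g l (W 0 ω l * W (j : ℕ) ω l / (∑ i ∈ Finset.range n, W i ω l))) (m l))
      ∧ (if l ∈ L1 then
        poissonPMF (∑ j ∈ Finset.range n,
          g l (W 0 ω l * W j ω l / (∑ i ∈ Finset.range n, W i ω l))) (m l)
      else
        pbPMF (fun j : Fin n =>
          g l (W 0 ω l * W (j : ℕ) ω l / (∑ i ∈ Finset.range n, W i ω l))) (m l)) ≤ 1 := by
    intro n l ω
    by_cases hl : l ∈ L1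
    · simp only [if_pos hl]
      have hr : 0 ≤ ∑ j ∈ Finset.range n,
          g l (W 0 ω l * W j ω l / (∑ i ∈ Finset.range n, W i ω l)) :=
        Finset.sum_nonneg fun j _ => hgnonneg l _ (hXnn n j l ω)
      exact ⟨Stmt0Aux.poissonPMF_nonneg hr (m l), Stmt0Aux.poissonPMF_le_one hr (m l)⟩
    · simp only [if_neg hl]
      have hq0 : ∀ j : Fin n, 0 ≤ g l (W 0 ω l * W (j:ℕ) ω l / (∑ i ∈ Finset.range n, W i ω l)) :=
        fun j => hgnonneg l _ (hXnn n (j:ℕ) l ω)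
      have hq1 : ∀ j : Fin n, g l (W 0 ω l * W (j:ℕ) ω l / (∑ i ∈ Finset.range n, W i ω l)) ≤ 1 :=
        fun j => hgle1 l hl _ (hXnn n (j:ℕ) l ω)
      exact ⟨Stmt0Aux.pbPMF_nonneg _ (m l) hq0 hq1, Stmt0Aux.pbPMF_le_one _ (m l) hq0 hq1⟩
  have hFle : ∀ n ω, F n ω ≤ 1 := by
    intro n ω
    rw [hFdef]
    calc ENNReal.ofReal _ ≤ ENNReal.ofReal 1 := by
          apply ENNReal.ofReal_le_ofReal
          exact Finset.prod_le_one (fun l _ => (hfac n l ω).1) (fun l _ => (hfac n l ω).2)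
      _ = 1 := by simp
  have hFlimle : ∀ ω, Flim ω ≤ 1 := by
    intro ω
    rw [hFlimdef]
    calc ENNReal.ofReal _ ≤ ENNReal.ofReal 1 := by
          apply ENNReal.ofReal_le_ofReal
          refine Finset.prod_le_one (fun l _ => ?_) (fun l _ => ?_)
          · exact Stmt0Aux.poissonPMF_nonneg (mul_nonneg (hc l).le (hWnonneg 0 ω l)) (m l)
          · exact Stmt0Aux.poissonPMF_le_one (mul_nonneg (hc l).le (hWnonneg 0 ω l)) (m l)
      _ = 1 := by simp
  -- a.e. good event
  have hgood : ∀ l : Fin L, ∀ᵐ ω ∂P, (∀ i, W i ω l = 0) ∨ (∃ mu : ℝ, 0 < mu ∧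
      Tendsto (fun n => (∑ i ∈ Finset.range n, W i ω l) / n) atTop (nhds mu)) := by
    intro l
    have hXint : Integrable (fun ω => W 0 ω l) P := by
      refine Integrable.mono' hWint ((hXmeas 0 l).aestronglyMeasurable)
        (Filter.Eventually.of_forall fun ω => ?_)
      rw [Real.norm_eq_abs, abs_of_nonneg (hWnonneg 0 ω l)]
      exact Finset.single_le_sum (fun l' _ => hWnonneg 0 ω l') (Finset.mem_univ l)
    set mu : ℝ := ∫ ω, W 0 ω l ∂P with hmudef
    have hmu0 : 0 ≤ mu := integral_nonneg fun ω => hWnonneg 0 ω l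
    rcases eq_or_lt_of_le hmu0 with hmuz | hmup
    · -- zero mean : all coordinates vanish a.s.
      have hae0 : (fun ω => W 0 ω l) =ᵐ[P] 0 := by
        rw [← integral_eq_zero_iff_of_nonneg (fun ω => hWnonneg 0 ω l) hXint]
        exact hmuz.symm
      have hball : ∀ i : ℕ, ∀ᵐ ω ∂P, W i ω l = 0 := by
        intro i
        have ms : MeasurableSet {v : Fin L → ℝ | v l ≠ 0} := by
          have e : {v : Fin L → ℝ | v l ≠ 0}
              = (fun v : Fin L → ℝ => v l) ⁻¹' ({(0:ℝ)}ᶜ) := rfl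
          rw [e]
          exact (measurable_pi_apply l) (measurableSet_singleton (0:ℝ)).compl
        have h0 : P ((W 0) ⁻¹' {v : Fin L → ℝ | v l ≠ 0}) = 0 := by
          have := ae_iff.1 hae0
          simpa [Set.preimage, Pi.zero_apply] using this
        have hi : P ((W i) ⁻¹' {v : Fin L → ℝ | v l ≠ 0}) = 0 := by
          rw [← Measure.map_apply (hWmeas i) ms, hWident i,
            Measure.map_apply (hWmeas 0) ms]
          exact h0
        rw [ae_iff]
        simpa [Set.preimage] using hi
      have := (ae_all_iff).2 hball
      filter_upwards [this] with ω hω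
      exact Or.inl hω
    · -- positive mean : SLLN
      have hslln := ProbabilityTheory.strong_law_ae (μ := P) (fun i ω => W i ω l) hXint
        (fun i j hij => (hWindep.indepFun hij).comp (measurable_pi_apply l)
          (measurable_pi_apply l))
        (fun i => IdentDistrib.comp
          ⟨(hWmeas i).aemeasurable, (hWmeas 0).aemeasurable, hWident i⟩
          (measurable_pi_apply l))
      filter_upwards [hslln] with ω hω
      refine Or.inr ⟨mu, hmup, ?_⟩
      have : (fun n : ℕ => (n:ℝ)⁻¹ • ∑ i ∈ Finset.range n, W i ω l)
          = fun n : ℕ => (∑ i ∈ Finset.range n, W i ω l) / n := by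
        funext n
        rw [smul_eq_mul, inv_mul_eq_div]
      rw [← this]
      exact hω
  have hgoodall : ∀ᵐ ω ∂P, ∀ l : Fin L, (∀ i, W i ω l = 0) ∨ (∃ mu : ℝ, 0 < mu ∧
      Tendsto (fun n => (∑ i ∈ Finset.range n, W i ω l) / n) atTop (nhds mu)) :=
    (ae_all_iff).2 hgood
  -- pointwise convergence on the good event
  have hae : ∀ᵐ ω ∂P, Tendsto (fun n => F n ω) atTop (nhds (Flim ω)) := by
    filter_upwards [hgoodall] with ω hω
    rw [hFdef, hFlimdef]
    refine (ENNReal.continuous_ofReal.tendsto _).comp ?_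
    refine tendsto_finset_prod _ fun l _ => ?_
    have hkey := Stmt0AuxB.layer_key (g l) (c l) M δ ν hM hδ hν (hc l).le (hC1 l)
      (fun i => W i ω l) (fun i => hWnonneg i ω l) (hω l)
    obtain ⟨H1, H2⟩ := hkey
    by_cases hl : l ∈ L1
    · simp only [if_pos hl]
      exact ((Stmt0Aux.poissonPMF_continuous (m l)).tendsto _).comp H1
    · simp only [if_neg hl]
      refine Stmt0Aux.pb_tendsto (c l * W 0 ω l)
        (fun n (j : Fin n) =>
          g l (W 0 ω l * W (j:ℕ) ω l / (∑ i ∈ Finset.range n, W i ω l)))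
        (m l) (fun n j => hgnonneg l _ (hXnn n (j:ℕ) l ω)) ?_ ?_
      · intro ε hε
        filter_upwards [H2 ε hε] with n hn
        intro j
        exact hn (j:ℕ) (Finset.mem_range.2 j.isLt)
      · refine H1.congr fun n => ?_
        exact (Fin.sum_univ_eq_sum_range
          (fun j => g l (W 0 ω l * W j ω l / (∑ i ∈ Finset.range n, W i ω l))) n).symm
  -- dominated convergence
  have hconv : Tendsto (fun n => ∫⁻ ω, F n ω ∂P) atTop (nhds (∫⁻ ω, Flim ω ∂P)) := by
    refine tendsto_lintegral_of_dominated_convergence (fun _ => 1) hFmeas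
      (fun n => Filter.Eventually.of_forall (hFle n)) ?_ hae
    simp
  have hfin : ∫⁻ ω, Flim ω ∂P ≠ ⊤ := by
    refine ne_of_lt (lt_of_le_of_lt ?_ (by simp : (1 : ENNReal) < ⊤))
    calc ∫⁻ ω, Flim ω ∂P ≤ ∫⁻ _, 1 ∂P := lintegral_mono hFlimle
      _ = 1 := by simp
  have hfinal := (ENNReal.tendsto_toReal hfin).comp hconv
  refine hfinal.congr fun n => ?_
  rw [hPn n]
  rfl
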